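/- A finite connected simple graph G with at least one edge is maximally independent of type 2 if and only if G is an edge-disjoint union of two spanning trees. -/

import Mathlib

open SimpleGraph

noncomputable section

/-- The freedom number `f(H) = 2|V(H)| - |E(H)|` of a subgraph. -/
def subFreedom {V : Type} {G : SimpleGraph V} (H : G.Subgraph) : ℤ :=
  2 * (H.verts.ncard : ℤ) - (H.edgeSet.ncard : ℤ)

/-- The freedom number `f(G) = 2|V| - |E|` of a graph. -/
def gFreedom {V : Type} (G : SimpleGraph V) : ℤ :=
  2 * ((Set.univ : Set V).ncard : ℤ) - (G.edgeSet.ncard : ℤ)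

/-- `G` is independent of type 2: every subgraph (with nonempty vertex set)
has freedom number at least 2. -/
def Indep2 {V : Type} (G : SimpleGraph V) : Prop :=
  ∀ H : G.Subgraph, H.verts.Nonempty → 2 ≤ subFreedom H

/-- `G` is maximally independent of type 2. -/
def MaxIndep2 {V : Type} (G : SimpleGraph V) : Prop := Indep2 G ∧ gFreedom G = 2

/-- `G` is independent of type 3: every subgraph with at least one edge
has freedom number at least 3. -/
def Indep3 {V : Type} (G : SimpleGraph V) : Prop :=
  ∀ H : G.Subgraph, H.edgeSet.Nonempty → 3 ≤ subFreedom H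

/-- `G` is maximally independent of type 3. -/
def MaxIndep3 {V : Type} (G : SimpleGraph V) : Prop := Indep3 G ∧ gFreedom G = 3

/-- A Laman graph: connected and maximally independent of type 3. -/
def Laman {V : Type} (G : SimpleGraph V) : Prop := G.Connected ∧ MaxIndep3 G

/-- Henneberg 1 move: `G'` (on vertex type `β`) is obtained from `G` (on `α`)
via the vertex embedding `φ` by adjoining the new vertex `w` joined to the images
of two distinct vertices `a`, `b` of `G`. -/
def Henneberg1Rel {α β : Type} (G : SimpleGraph α) (G' : SimpleGraph β)
    (φ : α ↪ β) (w : β) : Prop :=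
  (∀ y : β, y ∈ Set.range φ ∨ y = w) ∧ w ∉ Set.range φ ∧
  ∃ a b : α, a ≠ b ∧
    ∀ x y : β, G'.Adj x y ↔
      ((∃ c d : α, G.Adj c d ∧ x = φ c ∧ y = φ d) ∨
       (x = w ∧ (y = φ a ∨ y = φ b)) ∨ (y = w ∧ (x = φ a ∨ x = φ b)))

/-- Henneberg 2 move: `G'` is obtained from `G` by breaking the edge `(u,v)` of `G`
at the new vertex `w` and adding an edge from `w` to a third vertex `z`. -/
def Henneberg2Rel {α β : Type} (G : SimpleGraph α) (G' : SimpleGraph β)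
    (φ : α ↪ β) (w : β) : Prop :=
  (∀ y : β, y ∈ Set.range φ ∨ y = w) ∧ w ∉ Set.range φ ∧
  ∃ u v z : α, G.Adj u v ∧ z ≠ u ∧ z ≠ v ∧
    ∀ x y : β, G'.Adj x y ↔
      ((∃ a b : α, G.Adj a b ∧ ¬ (s(a, b) = s(u, v)) ∧ x = φ a ∧ y = φ b) ∨
       (x = w ∧ (y = φ u ∨ y = φ v ∨ y = φ z)) ∨
       (y = w ∧ (x = φ u ∨ x = φ v ∨ x = φ z)))

def finCastSuccEmb (n : ℕ) : Fin n ↪ Fin (n + 1) :=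
  ⟨Fin.castSucc, Fin.castSucc_injective n⟩

/-- `Derived G0 n G` : the graph `G` on `Fin n` is obtained from the base graph `G0`
by a finite sequence of Henneberg 1 and Henneberg 2 moves. -/
inductive Derived {m : ℕ} (G0 : SimpleGraph (Fin m)) : (n : ℕ) → SimpleGraph (Fin n) → Prop
  | base : Derived G0 m G0
  | h1 {n : ℕ} {G : SimpleGraph (Fin n)} {G' : SimpleGraph (Fin (n + 1))} :
      Derived G0 n G → Henneberg1Rel G G' (finCastSuccEmb n) (Fin.last n) →
      Derived G0 (n + 1) G'
  | h2 {n : ℕ} {G : SimpleGraph (Fin n)} {G' : SimpleGraph (Fin (n + 1))} :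
      Derived G0 n G → Henneberg2Rel G G' (finCastSuccEmb n) (Fin.last n) →
      Derived G0 (n + 1) G'

/-- `G` is an edge-disjoint union of two spanning trees. -/
def TwoSpanningTrees {V : Type} (G : SimpleGraph V) : Prop :=
  ∃ E₁ E₂ : Set (Sym2 V), E₁ ∪ E₂ = G.edgeSet ∧ Disjoint E₁ E₂ ∧
    (SimpleGraph.fromEdgeSet E₁).IsTree ∧ (SimpleGraph.fromEdgeSet E₂).IsTree

set_option linter.unusedSectionVars false
open Finset

namespace TwoTreesAux

variable {V : Type} [DecidableEq V]

/-- Transfer a predicate along walks. -/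
lemma walk_rec {G : SimpleGraph V} {P : V → Prop}
    (hP : ∀ ⦃u w⦄, P u → G.Adj u w → P w) :
    ∀ {u w : V}, G.Walk u w → P u → P w := by
  intro u w p
  induction p with
  | nil => exact id
  | cons h q ih => exact fun hu => ih (hP hu h)

lemma reach_rec {G : SimpleGraph V} {P : V → Prop}
    (hP : ∀ ⦃u w⦄, P u → G.Adj u w → P w) {u w : V}
    (h : G.Reachable u w) (hu : P u) : P w := by
  obtain ⟨p⟩ := h
  exact walk_rec hP p hu

lemma reach_closure {G G' : SimpleGraph V} (h : ∀ a b, G.Adj a b → G'.Reachable a b)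
    {u w : V} (hr : G.Reachable u w) : G'.Reachable u w := by
  refine reach_rec (P := fun t => G'.Reachable u t) ?_ hr (Reachable.refl u)
  exact fun a b ha hab => ha.trans (h a b hab)

lemma mem_support_of_mem_edge {G : SimpleGraph V} {u w : V} (c : G.Walk u w) {e : Sym2 V}
    (he : e ∈ c.edges) {v : V} (hv : v ∈ e) : v ∈ c.support := by
  induction e using Sym2.ind with
  | _ x y =>
    rw [Sym2.mem_iff] at hv
    rcases hv with rfl | rfl
    · exact c.fst_mem_support_of_mem_edges he
    · exact c.snd_mem_support_of_mem_edges he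

lemma isAcyclic_anti {G H : SimpleGraph V} (hGH : G ≤ H) (hH : H.IsAcyclic) : G.IsAcyclic := by
  intro v c hc
  have hsub : ∀ e ∈ c.edges, e ∈ H.edgeSet := fun e he =>
    edgeSet_mono hGH (c.edges_subset_edgeSet he)
  exact hH (c.transfer H hsub) (hc.transfer hsub)

/-- In a cycle through `v`, the vertex `v` has two distinct neighbours joined by a
walk avoiding `v`. -/
lemma cycle_nbrs' {G : SimpleGraph V} {v : V} {d : G.Walk v v} (hd : d.IsCycle) :
    ∃ x z, x ≠ z ∧ G.Adj v x ∧ G.Adj v z ∧ ∃ q : G.Walk x z, v ∉ q.support := by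
  cases d with
  | nil => exact absurd hd.three_le_length (by simp)
  | @cons _ b _ h q =>
    cases q with
    | nil => exact absurd rfl h.ne
    | @cons _ c _ h₁ q₂ =>
      obtain ⟨z, r, h₂, heq⟩ := SimpleGraph.Walk.exists_cons_eq_concat h₁ q₂
      rw [heq] at hd
      have hvr : v ∉ r.support := by
        have h2 := hd.2
        simp only [Walk.support_cons, Walk.support_concat, List.tail_cons,
          List.concat_eq_append, List.nodup_append] at h2
        intro hmem
        exact h2.2.2 _ hmem _ (by simp) rfl
      have hne : b ≠ z := by
        intro hbz
        subst hbz
        have hnd := hd.edges_nodup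
        simp only [Walk.edges_cons, Walk.edges_concat, List.concat_eq_append,
          List.nodup_cons, List.mem_append] at hnd
        exact hnd.1 (Or.inr (by simp [Sym2.eq_swap]))
      exact ⟨b, z, hne, h, h₂.symm, r, hvr⟩

lemma cycle_nbrs {G : SimpleGraph V} {w v : V} {c : G.Walk w w} (hc : c.IsCycle)
    (hs : v ∈ c.support) :
    ∃ x z, x ≠ z ∧ G.Adj v x ∧ G.Adj v z ∧ ∃ q : G.Walk x z, v ∉ q.support :=
  cycle_nbrs' (hc.rotate hs)

end TwoTreesAux

namespace TwoTreesAux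

variable {V : Type} [DecidableEq V]

lemma acyclic_insert {T : Finset (Sym2 V)} {v a : V}
    (hT : (fromEdgeSet (T : Set (Sym2 V))).IsAcyclic)
    (hv : ∀ p ∈ T, v ∉ p) (hva : v ≠ a) :
    (fromEdgeSet ((insert s(v,a) T : Finset (Sym2 V)) : Set (Sym2 V))).IsAcyclic := by
  intro w c hc
  by_cases hvs : v ∈ c.support
  · obtain ⟨x, z, hxz, hx, hz, _⟩ := cycle_nbrs hc hvs
    have key : ∀ u, (fromEdgeSet ((insert s(v,a) T : Finset (Sym2 V)) : Set (Sym2 V))).Adj v u → u = a := by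
      intro u hadj
      rw [fromEdgeSet_adj] at hadj
      rcases hadj with ⟨hmem, hne⟩
      simp only [Finset.coe_insert, Set.mem_insert_iff, Finset.mem_coe] at hmem
      rcases hmem with he | hmem
      · exact Sym2.congr_right.mp he
      · exact absurd (by simp : v ∈ s(v,u)) (hv _ hmem)
    exact hxz ((key x hx).trans (key z hz).symm)
  · have hsub : ∀ e ∈ c.edges, e ∈ (fromEdgeSet (T : Set (Sym2 V))).edgeSet := by
      intro e he
      have hee := c.edges_subset_edgeSet he
      rw [edgeSet_fromEdgeSet] at hee ⊢
      obtain ⟨hmem, hnd⟩ := hee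
      refine ⟨?_, hnd⟩
      simp only [Finset.coe_insert, Set.mem_insert_iff, Finset.mem_coe] at hmem
      rcases hmem with rfl | hmem
      · exact absurd (mem_support_of_mem_edge c he (by simp)) hvs
      · exact hmem
    exact hT (c.transfer _ hsub) (hc.transfer hsub)

lemma acyclic_swap {T : Finset (Sym2 V)} {v x y : V}
    (hT : (fromEdgeSet (T : Set (Sym2 V))).IsAcyclic)
    (hv : ∀ p ∈ T, v ∉ p) (hxyT : s(x,y) ∈ T) (hvx : v ≠ x) (hvy : v ≠ y) (hxy : x ≠ y) :
    (fromEdgeSet ((insert s(v,x) (insert s(v,y) (T.erase s(x,y))) : Finset (Sym2 V)) : Set (Sym2 V))).IsAcyclic := by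
  set T' : Finset (Sym2 V) := insert s(v,x) (insert s(v,y) (T.erase s(x,y))) with hT'def
  have hedge : ∀ e ∈ T', v ∉ e → e ∈ T ∧ e ≠ s(x,y) := by
    intro e he hve
    rw [hT'def] at he
    simp only [Finset.mem_insert, Finset.mem_erase] at he
    rcases he with rfl | rfl | ⟨hne, heT⟩
    · exact absurd (by simp) hve
    · exact absurd (by simp) hve
    · exact ⟨heT, hne⟩
  have hnbr : ∀ u, (fromEdgeSet (T' : Set (Sym2 V))).Adj v u → u = x ∨ u = y := by
    intro u hadj
    rw [fromEdgeSet_adj] at hadj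
    rcases hadj with ⟨hmem, hne⟩
    rw [Finset.mem_coe, hT'def] at hmem
    simp only [Finset.mem_insert, Finset.mem_erase] at hmem
    rcases hmem with he | he | ⟨_, heT⟩
    · exact Or.inl (Sym2.congr_right.mp he)
    · exact Or.inr (Sym2.congr_right.mp he)
    · exact absurd (by simp : v ∈ s(v,u)) (hv _ heT)
  intro w c hc
  by_cases hvs : v ∈ c.support
  · obtain ⟨p, q, hpq, hp, hq, r, hvr⟩ := cycle_nbrs hc hvs
    have hspq : s(p,q) = s(x,y) := by
      rcases hnbr p hp with rfl | rfl <;> rcases hnbr q hq with rfl | rfl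
      · exact absurd rfl hpq
      · rfl
      · exact Sym2.eq_swap
      · exact absurd rfl hpq
    have hredge : ∀ e ∈ r.edges, e ∈ (fromEdgeSet (T : Set (Sym2 V))).edgeSet := by
      intro e he
      have hee := r.edges_subset_edgeSet he
      rw [edgeSet_fromEdgeSet] at hee ⊢
      obtain ⟨hmem, hnd⟩ := hee
      have hve : v ∉ e := fun hh => hvr (mem_support_of_mem_edge r he hh)
      exact ⟨Finset.mem_coe.mpr (hedge e (Finset.mem_coe.mp hmem) hve).1, hnd⟩
    have hrne : ∀ e ∈ r.edges, e ≠ s(x,y) := by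
      intro e he
      have hee := r.edges_subset_edgeSet he
      rw [edgeSet_fromEdgeSet] at hee
      obtain ⟨hmem, _⟩ := hee
      have hve : v ∉ e := fun hh => hvr (mem_support_of_mem_edge r he hh)
      exact (hedge e (Finset.mem_coe.mp hmem) hve).2
    set r' := r.transfer _ hredge with hr'def
    set P := r'.toPath with hPdef
    have hPe : ∀ e ∈ (P : (fromEdgeSet (T : Set (Sym2 V))).Walk p q).edges, e ≠ s(x,y) := by
      intro e he
      apply hrne
      have h2 := Walk.edges_toPath_subset r' he
      rwa [Walk.edges_transfer] at h2
    have hadjqp : (fromEdgeSet (T : Set (Sym2 V))).Adj q p := by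
      rw [fromEdgeSet_adj]
      refine ⟨?_, fun h => hpq h.symm⟩
      rw [Finset.mem_coe]
      have : s(q,p) = s(x,y) := Sym2.eq_swap.trans hspq
      rw [this]; exact hxyT
    have hcyc := SimpleGraph.Path.cons_isCycle P hadjqp ?_
    · exact hT _ hcyc
    · intro hmem
      exact hPe _ hmem (Sym2.eq_swap.trans hspq)
  · have hsub : ∀ e ∈ c.edges, e ∈ (fromEdgeSet (T : Set (Sym2 V))).edgeSet := by
      intro e he
      have hee := c.edges_subset_edgeSet he
      rw [edgeSet_fromEdgeSet] at hee ⊢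
      obtain ⟨hmem, hnd⟩ := hee
      have hve : v ∉ e := fun hh => hvs (mem_support_of_mem_edge c he hh)
      exact ⟨Finset.mem_coe.mpr (hedge e (Finset.mem_coe.mp hmem) hve).1, hnd⟩
    exact hT (c.transfer _ hsub) (hc.transfer hsub)

/-- `T` is (the edge set of) a spanning tree on the vertex set `S`. -/
def MyTree (S : Finset V) (T : Finset (Sym2 V)) : Prop :=
  (∀ p ∈ T, ¬ p.IsDiag ∧ ∀ x ∈ p, x ∈ S) ∧
  (∀ x ∈ S, ∀ y ∈ S, (fromEdgeSet (T : Set (Sym2 V))).Reachable x y) ∧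
  (fromEdgeSet (T : Set (Sym2 V))).IsAcyclic

lemma MyTree.not_mem_v {S : Finset V} {T : Finset (Sym2 V)} (h : MyTree S T) {v : V}
    (hv : v ∉ S) : ∀ p ∈ T, v ∉ p :=
  fun p hp hvp => hv ((h.1 p hp).2 v hvp)

lemma mytree_leaf {S : Finset V} {T : Finset (Sym2 V)} {v a : V} (h : MyTree S T)
    (hv : v ∉ S) (ha : a ∈ S) : MyTree (insert v S) (insert s(v,a) T) := by
  obtain ⟨hw, hr, hac⟩ := h
  have hva : v ≠ a := fun h' => hv (h' ▸ ha)
  have hvT : ∀ p ∈ T, v ∉ p := fun p hp hvp => hv ((hw p hp).2 v hvp)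
  refine ⟨?_, ?_, acyclic_insert hac hvT hva⟩
  · intro p hp
    rcases Finset.mem_insert.mp hp with rfl | hp
    · refine ⟨by simp [hva], ?_⟩
      intro x hx
      rw [Sym2.mem_iff] at hx
      rcases hx with rfl | rfl
      · exact Finset.mem_insert_self _ _
      · exact Finset.mem_insert_of_mem ha
    · exact ⟨(hw p hp).1, fun x hx => Finset.mem_insert_of_mem ((hw p hp).2 x hx)⟩
  · have hmono : fromEdgeSet (T : Set (Sym2 V)) ≤
        fromEdgeSet ((insert s(v,a) T : Finset (Sym2 V)) : Set (Sym2 V)) :=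
      fromEdgeSet_mono (by intro e he; simp only [Finset.coe_insert, Set.mem_insert_iff,
        Finset.mem_coe] at he ⊢; exact Or.inr he)
    have hadj : (fromEdgeSet ((insert s(v,a) T : Finset (Sym2 V)) : Set (Sym2 V))).Adj v a := by
      rw [fromEdgeSet_adj]; exact ⟨by simp, hva⟩
    have hreachv : ∀ u ∈ S, (fromEdgeSet ((insert s(v,a) T : Finset (Sym2 V)) : Set (Sym2 V))).Reachable v u :=
      fun u hu => hadj.reachable.trans ((hr a ha u hu).mono hmono)
    intro p hp q hq
    rcases Finset.mem_insert.mp hp with hp' | hp' <;> rcases Finset.mem_insert.mp hq with hq' | hq'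
    · rw [hp', hq']
    · rw [hp']; exact hreachv q hq'
    · rw [hq']; exact (hreachv p hp').symm
    · exact (hr p hp' q hq').mono hmono

lemma mytree_swap {S : Finset V} {T : Finset (Sym2 V)} {v x y : V} (h : MyTree S T)
    (hv : v ∉ S) (hxyT : s(x,y) ∈ T) :
    MyTree (insert v S) (insert s(v,x) (insert s(v,y) (T.erase s(x,y)))) := by
  obtain ⟨hw, hr, hac⟩ := h
  have hx : x ∈ S := (hw _ hxyT).2 x (by simp)
  have hy : y ∈ S := (hw _ hxyT).2 y (by simp)
  have hxy : x ≠ y := by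
    have := (hw _ hxyT).1
    simpa [Sym2.mk_isDiag_iff] using this
  have hvx : v ≠ x := fun h' => hv (h' ▸ hx)
  have hvy : v ≠ y := fun h' => hv (h' ▸ hy)
  have hvT : ∀ p ∈ T, v ∉ p := fun p hp hvp => hv ((hw p hp).2 v hvp)
  set T' : Finset (Sym2 V) := insert s(v,x) (insert s(v,y) (T.erase s(x,y))) with hT'def
  have hadjvx : (fromEdgeSet (T' : Set (Sym2 V))).Adj v x := by
    rw [fromEdgeSet_adj]
    exact ⟨by rw [Finset.mem_coe, hT'def]; exact Finset.mem_insert_self _ _, hvx⟩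
  have hadjvy : (fromEdgeSet (T' : Set (Sym2 V))).Adj v y := by
    rw [fromEdgeSet_adj]
    refine ⟨?_, hvy⟩
    rw [Finset.mem_coe, hT'def]
    exact Finset.mem_insert_of_mem (Finset.mem_insert_self _ _)
  refine ⟨?_, ?_, acyclic_swap hac hvT hxyT hvx hvy hxy⟩
  · intro p hp
    rw [hT'def] at hp
    simp only [Finset.mem_insert, Finset.mem_erase] at hp
    rcases hp with rfl | rfl | ⟨_, hpT⟩
    · refine ⟨by simp [hvx], ?_⟩
      intro u hu; rw [Sym2.mem_iff] at hu
      rcases hu with rfl | rfl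
      · exact Finset.mem_insert_self _ _
      · exact Finset.mem_insert_of_mem hx
    · refine ⟨by simp [hvy], ?_⟩
      intro u hu; rw [Sym2.mem_iff] at hu
      rcases hu with rfl | rfl
      · exact Finset.mem_insert_self _ _
      · exact Finset.mem_insert_of_mem hy
    · exact ⟨(hw p hpT).1, fun u hu => Finset.mem_insert_of_mem ((hw p hpT).2 u hu)⟩
  · have hstep : ∀ a b, (fromEdgeSet (T : Set (Sym2 V))).Adj a b →
        (fromEdgeSet (T' : Set (Sym2 V))).Reachable a b := by
      intro a b hab
      rw [fromEdgeSet_adj] at hab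
      obtain ⟨habT, hne⟩ := hab
      rw [Finset.mem_coe] at habT
      by_cases hcase : s(a,b) = s(x,y)
      · rcases Sym2.eq_iff.mp hcase with ⟨rfl, rfl⟩ | ⟨rfl, rfl⟩
        · exact hadjvx.symm.reachable.trans hadjvy.reachable
        · exact hadjvy.symm.reachable.trans hadjvx.reachable
      · refine Adj.reachable ?_
        rw [fromEdgeSet_adj]
        refine ⟨?_, hne⟩
        rw [Finset.mem_coe, hT'def]
        exact Finset.mem_insert_of_mem (Finset.mem_insert_of_mem
          (Finset.mem_erase.mpr ⟨hcase, habT⟩))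
    have hreachv : ∀ u ∈ S, (fromEdgeSet (T' : Set (Sym2 V))).Reachable v u :=
      fun u hu => hadjvx.reachable.trans (reach_closure hstep (hr x hx u hu))
    intro a ha b hb
    rcases Finset.mem_insert.mp ha with ha' | ha' <;> rcases Finset.mem_insert.mp hb with hb' | hb'
    · rw [ha', hb']
    · rw [ha']; exact hreachv b hb'
    · rw [hb']; exact (hreachv a ha').symm
    · exact reach_closure hstep (hr a ha' b hb')

end TwoTreesAux

namespace TwoTreesAux

variable {V : Type} [DecidableEq V] [Fintype V]

/-- Number of edges (with multiplicity `m`) inside the vertex set `W`. -/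
def eC (m : Sym2 V → ℕ) (W : Finset V) : ℕ := ∑ p ∈ W.sym2, m p

lemma eC_eq_sum_univ (m : Sym2 V → ℕ) (W : Finset V) :
    eC m W = ∑ p : Sym2 V, if p ∈ W.sym2 then m p else 0 := by
  rw [Finset.sum_ite_mem, Finset.univ_inter, eC]

lemma eC_congr {m₁ m₂ : Sym2 V → ℕ} (W : Finset V) (h : ∀ p ∈ W.sym2, m₁ p = m₂ p) :
    eC m₁ W = eC m₂ W := Finset.sum_congr rfl h

lemma eC_add (m₁ m₂ : Sym2 V → ℕ) (W : Finset V) :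
    eC (fun p => m₁ p + m₂ p) W = eC m₁ W + eC m₂ W := Finset.sum_add_distrib

lemma eC_delta (q : Sym2 V) (W : Finset V) :
    eC (fun p => if p = q then 1 else 0) W = if q ∈ W.sym2 then 1 else 0 :=
  Finset.sum_ite_eq' _ _ _

lemma sym2_mono {W₁ W₂ : Finset V} (h : W₁ ⊆ W₂) : W₁.sym2 ⊆ W₂.sym2 := by
  intro p hp
  rw [Finset.mem_sym2_iff] at hp ⊢
  exact fun a ha => h (hp a ha)

/-- Supermodularity of the inside-edge count. -/
lemma eC_supermod (m : Sym2 V → ℕ) (D₁ D₂ : Finset V) :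
    eC m D₁ + eC m D₂ ≤ eC m (D₁ ∪ D₂) + eC m (D₁ ∩ D₂) := by
  rw [eC_eq_sum_univ, eC_eq_sum_univ, eC_eq_sum_univ m (D₁ ∪ D₂), eC_eq_sum_univ m (D₁ ∩ D₂),
    ← Finset.sum_add_distrib, ← Finset.sum_add_distrib]
  apply Finset.sum_le_sum
  intro p _
  by_cases h1 : p ∈ D₁.sym2 <;> by_cases h2 : p ∈ D₂.sym2
  · have hu : p ∈ (D₁ ∪ D₂).sym2 := sym2_mono Finset.subset_union_left h1
    have hi : p ∈ (D₁ ∩ D₂).sym2 := by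
      rw [Finset.mem_sym2_iff] at h1 h2 ⊢
      exact fun a ha => Finset.mem_inter.mpr ⟨h1 a ha, h2 a ha⟩
    simp [h1, h2, hu, hi]
  · have hu : p ∈ (D₁ ∪ D₂).sym2 := sym2_mono Finset.subset_union_left h1
    simp [h1, h2, hu]
  · have hu : p ∈ (D₁ ∪ D₂).sym2 := sym2_mono Finset.subset_union_right h2
    simp [h1, h2, hu]
  · simp [h1, h2]

lemma sym2_erase_eq {S : Finset V} {v : V} :
    (S.erase v).sym2 = S.sym2.filter (fun p => ¬ v ∈ p) := by
  ext p
  simp only [Finset.mem_sym2_iff, Finset.mem_filter, Finset.mem_erase]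
  constructor
  · intro h
    exact ⟨fun a ha => (h a ha).2, fun hv => (h v hv).1 rfl⟩
  · intro ⟨h, hv⟩
    exact fun a ha => ⟨fun he => hv (he ▸ ha), h a ha⟩

/-- Removing a vertex: the edge count splits off the star at `v`. -/
lemma eC_erase (m : Sym2 V → ℕ) {S : Finset V} {v : V} :
    eC m S = eC m (S.erase v) + ∑ p ∈ S.sym2.filter (fun p => v ∈ p), m p := by
  rw [eC, eC, sym2_erase_eq, add_comm]
  exact (Finset.sum_filter_add_sum_filter_not _ _ _).symm

/-- The star sum at `v` over `insert v D` equals the sum of multiplicities to `D`. -/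
lemma star_sum (m : Sym2 V → ℕ) (hnd : ∀ p, m p ≠ 0 → ¬ p.IsDiag) {D : Finset V} {v : V}
    (hv : v ∉ D) :
    ∑ p ∈ (insert v D).sym2.filter (fun p => v ∈ p), m p = ∑ w ∈ D, m s(v,w) := by
  have hinj : Set.InjOn (fun w => s(v,w)) D := by
    intro a _ b _ hab
    exact Sym2.congr_right.mp hab
  rw [← Finset.sum_image (f := m) (g := fun w => s(v,w)) (fun a ha b hb h => hinj ha hb h)]
  apply (Finset.sum_subset ?_ ?_).symm
  · intro p hp
    rw [Finset.mem_image] at hp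
    obtain ⟨w, hw, rfl⟩ := hp
    rw [Finset.mem_filter, Finset.mem_sym2_iff]
    refine ⟨?_, by simp⟩
    intro a ha
    rw [Sym2.mem_iff] at ha
    rcases ha with rfl | rfl
    · exact Finset.mem_insert_self _ _
    · exact Finset.mem_insert_of_mem hw
  · intro p hp hnotim
    rw [Finset.mem_filter] at hp
    obtain ⟨hpmem, hvp⟩ := hp
    obtain ⟨u, rfl⟩ := Sym2.mem_iff_exists.mp hvp
    by_contra hm
    have hund : u ≠ v := by
      intro h
      exact (hnd _ hm) (by rw [h]; exact Sym2.mk_isDiag_iff.mpr rfl)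
    have hu : u ∈ D := by
      rw [Finset.mem_sym2_iff] at hpmem
      have := hpmem u (by simp)
      rcases Finset.mem_insert.mp this with h | h
      · exact absurd h hund
      · exact h
    exact hnotim (Finset.mem_image.mpr ⟨u, hu, rfl⟩)

lemma sum_mem_pair {S : Finset V} (p : Sym2 V) (c : ℕ) (hnd : ¬ p.IsDiag)
    (hin : ∀ x ∈ p, x ∈ S) : ∑ v ∈ S, (if v ∈ p then c else 0) = 2 * c := by
  revert hnd hin
  induction p using Sym2.ind with
  | _ a b =>
    intro hnd hin
    have hab : a ≠ b := by simpa [Sym2.mk_isDiag_iff] using hnd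
    have ha : a ∈ S := hin a (by simp)
    have hb : b ∈ S := hin b (by simp)
    rw [← Finset.sum_filter]
    have hfil : S.filter (fun v => v ∈ s(a,b)) = {a, b} := by
      ext u
      simp only [Finset.mem_filter, Sym2.mem_iff, Finset.mem_insert, Finset.mem_singleton]
      constructor
      · tauto
      · rintro (rfl | rfl) <;> simp [ha, hb]
    rw [hfil, Finset.sum_pair hab, two_mul]

/-- Handshake: the sum of star sums over `S` is twice the edge count in `S`,
provided all edges with nonzero multiplicity are inside `S` and non-diagonal. -/
lemma handshake (m : Sym2 V → ℕ) {S : Finset V}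
    (hsupp : ∀ p, m p ≠ 0 → ¬ p.IsDiag ∧ ∀ x ∈ p, x ∈ S) :
    ∑ v ∈ S, (∑ p ∈ S.sym2.filter (fun p => v ∈ p), m p) = 2 * eC m S := by
  have h1 : ∀ v, ∑ p ∈ S.sym2.filter (fun p => v ∈ p), m p
      = ∑ p ∈ S.sym2, if v ∈ p then m p else 0 := fun v => Finset.sum_filter _ _
  simp only [h1]
  rw [Finset.sum_comm, eC, Finset.mul_sum]
  apply Finset.sum_congr rfl
  intro p _
  rcases Nat.eq_zero_or_pos (m p) with h0 | hpos
  · simp [h0]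
  · obtain ⟨hnd, hin⟩ := hsupp p hpos.ne'
    exact sum_mem_pair p (m p) hnd hin

end TwoTreesAux

namespace TwoTreesAux

variable {V : Type} [DecidableEq V] [Fintype V]

/-- A forest (acyclic graph) whose edges all lie inside `W` has at most `|W| - 1` edges. -/
lemma forest_bound (T : Finset (Sym2 V)) :
    ∀ W : Finset V, W.Nonempty → (∀ p ∈ T, ¬ p.IsDiag ∧ ∀ a ∈ p, a ∈ W) →
    (fromEdgeSet (T : Set (Sym2 V))).IsAcyclic → T.card + 1 ≤ W.card := by
  induction T using Finset.strongInductionOn with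
  | _ T IH =>
    intro W hWne hwithin hac
    rcases Finset.eq_empty_or_nonempty T with rfl | hTne
    · simpa using Finset.card_pos.mpr hWne
    · obtain ⟨p₀, hp₀⟩ := hTne
      have hkey : ∀ a b : V, s(a,b) ∈ T → T.card + 1 ≤ W.card := by
        intro a b hab
        have handb : a ≠ b := by
          have := (hwithin _ hab).1
          simpa [Sym2.mk_isDiag_iff] using this
        have haW : a ∈ W := (hwithin _ hab).2 a (by simp)
        have hbW : b ∈ W := (hwithin _ hab).2 b (by simp)
        classical
        set T' : Finset (Sym2 V) := T.erase s(a,b) with hT'def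
        set G' : SimpleGraph V := fromEdgeSet (T' : Set (Sym2 V)) with hG'def
        set W₁ : Finset V := W.filter (fun w => G'.Reachable a w) with hW₁def
        set W₂ : Finset V := W.filter (fun w => ¬ G'.Reachable a w) with hW₂def
        have ha1 : a ∈ W₁ := by
          rw [hW₁def, Finset.mem_filter]; exact ⟨haW, Reachable.refl a⟩
        have hsubT : (T' : Set (Sym2 V)) ⊆ (T : Set (Sym2 V)) := by
          intro e he; rw [Finset.mem_coe] at he ⊢; exact Finset.mem_of_mem_erase he
        have hb2 : b ∈ W₂ := by
          rw [hW₂def, Finset.mem_filter]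
          refine ⟨hbW, fun hreach => ?_⟩
          obtain ⟨q⟩ := hreach
          have hqe : ∀ e ∈ q.edges, e ∈ (fromEdgeSet (T : Set (Sym2 V))).edgeSet :=
            fun e he => edgeSet_mono (fromEdgeSet_mono hsubT) (q.edges_subset_edgeSet he)
          set q' := q.transfer _ hqe with hq'def
          set P := q'.toPath with hPdef
          have hadjba : (fromEdgeSet (T : Set (Sym2 V))).Adj b a := by
            rw [fromEdgeSet_adj]
            exact ⟨by rw [Finset.mem_coe, Sym2.eq_swap]; exact hab, handb.symm⟩
          have hPne : s(b, a) ∉ (P : (fromEdgeSet (T : Set (Sym2 V))).Walk a b).edges := by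
            intro hmem
            have h2 := Walk.edges_toPath_subset q' hmem
            rw [hq'def, Walk.edges_transfer] at h2
            have h3 := q.edges_subset_edgeSet h2
            rw [edgeSet_fromEdgeSet] at h3
            obtain ⟨h4, _⟩ := h3
            rw [Finset.mem_coe, hT'def, Finset.mem_erase] at h4
            exact h4.1 (Sym2.eq_swap)
          exact hac _ (SimpleGraph.Path.cons_isCycle P hadjba hPne)
        -- every edge of T' lies within W₁ or within W₂
        have hsplit : ∀ p ∈ T', (∀ u ∈ p, u ∈ W₁) ∨ (∀ u ∈ p, u ∈ W₂) := by
          intro p hp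
          have hpT : p ∈ T := Finset.mem_of_mem_erase hp
          have hnd := (hwithin _ hpT).1
          have hin := (hwithin _ hpT).2
          revert hnd hin
          induction p using Sym2.ind with
          | _ c d =>
            intro hnd hin
            have hcd : c ≠ d := by simpa [Sym2.mk_isDiag_iff] using hnd
            have hcW : c ∈ W := hin c (by simp)
            have hdW : d ∈ W := hin d (by simp)
            have hadj : G'.Adj c d := by
              rw [hG'def, fromEdgeSet_adj]; exact ⟨Finset.mem_coe.mpr hp, hcd⟩
            by_cases hc : G'.Reachable a c
            · left
              intro u hu
              rw [Sym2.mem_iff] at hu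
              rcases hu with rfl | rfl
              · rw [hW₁def, Finset.mem_filter]; exact ⟨hcW, hc⟩
              · rw [hW₁def, Finset.mem_filter]; exact ⟨hdW, hc.trans hadj.reachable⟩
            · right
              intro u hu
              rw [Sym2.mem_iff] at hu
              rcases hu with rfl | rfl
              · rw [hW₂def, Finset.mem_filter]; exact ⟨hcW, hc⟩
              · rw [hW₂def, Finset.mem_filter]
                exact ⟨hdW, fun h => hc (h.trans hadj.symm.reachable)⟩
        set T₁ : Finset (Sym2 V) := T'.filter (fun p => ∀ u ∈ p, u ∈ W₁) with hT₁def
        set T₂ : Finset (Sym2 V) := T'.filter (fun p => ¬ ∀ u ∈ p, u ∈ W₁) with hT₂def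
        have hT₂' : ∀ p ∈ T₂, ∀ u ∈ p, u ∈ W₂ := by
          intro p hp
          rw [hT₂def, Finset.mem_filter] at hp
          rcases hsplit p hp.1 with h | h
          · exact absurd h hp.2
          · exact h
        have hdisjW : ∀ u, u ∈ W₁ → u ∈ W₂ → False := by
          intro u h1 h2
          rw [hW₁def, Finset.mem_filter] at h1
          rw [hW₂def, Finset.mem_filter] at h2
          exact h2.2 h1.2
        have habnotT₁ : s(a,b) ∉ T₁ := fun h =>
          (Finset.mem_erase.mp (Finset.mem_filter.mp h).1).1 rfl
        have habnotT₂ : s(a,b) ∉ T₂ := fun h =>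
          (Finset.mem_erase.mp (Finset.mem_filter.mp h).1).1 rfl
        have hsub1 : T₁ ⊂ T :=
          Finset.ssubset_iff_of_subset ((Finset.filter_subset _ _).trans (Finset.erase_subset _ _))
            |>.mpr ⟨s(a,b), hab, habnotT₁⟩
        have hsub2 : T₂ ⊂ T :=
          Finset.ssubset_iff_of_subset ((Finset.filter_subset _ _).trans (Finset.erase_subset _ _))
            |>.mpr ⟨s(a,b), hab, habnotT₂⟩
        have hsub1' : (T₁ : Set (Sym2 V)) ⊆ (T : Set (Sym2 V)) := by
          intro e he
          rw [Finset.mem_coe] at he ⊢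
          exact Finset.mem_of_mem_erase (Finset.mem_of_mem_filter _ he)
        have hsub2' : (T₂ : Set (Sym2 V)) ⊆ (T : Set (Sym2 V)) := by
          intro e he
          rw [Finset.mem_coe] at he ⊢
          exact Finset.mem_of_mem_erase (Finset.mem_of_mem_filter _ he)
        have hac1 : (fromEdgeSet (T₁ : Set (Sym2 V))).IsAcyclic :=
          isAcyclic_anti (fromEdgeSet_mono hsub1') hac
        have hac2 : (fromEdgeSet (T₂ : Set (Sym2 V))).IsAcyclic :=
          isAcyclic_anti (fromEdgeSet_mono hsub2') hac
        have hwin1 : ∀ p ∈ T₁, ¬ p.IsDiag ∧ ∀ u ∈ p, u ∈ W₁ := by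
          intro p hp
          rw [hT₁def, Finset.mem_filter] at hp
          exact ⟨(hwithin _ (Finset.mem_of_mem_erase hp.1)).1, hp.2⟩
        have hwin2 : ∀ p ∈ T₂, ¬ p.IsDiag ∧ ∀ u ∈ p, u ∈ W₂ := by
          intro p hp
          exact ⟨(hwithin _ (Finset.mem_of_mem_erase (Finset.mem_of_mem_filter _ hp))).1,
            hT₂' p hp⟩
        have hb1 := IH T₁ hsub1 W₁ ⟨a, ha1⟩ hwin1 hac1
        have hb2' := IH T₂ hsub2 W₂ ⟨b, hb2⟩ hwin2 hac2
        have hcardT : T₁.card + T₂.card = T'.card :=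
          Finset.card_filter_add_card_filter_not _
        have hcardW : W₁.card + W₂.card = W.card :=
          Finset.card_filter_add_card_filter_not _
        have hcardT' : T'.card = T.card - 1 := Finset.card_erase_of_mem hab
        have hTpos : 1 ≤ T.card := Finset.card_pos.mpr ⟨s(a,b), hab⟩
        omega
      -- produce an edge from p₀
      revert hp₀
      induction p₀ using Sym2.ind with
      | _ a b => exact fun hp₀ => hkey a b hp₀

end TwoTreesAux

namespace TwoTreesAux

variable {V : Type} [DecidableEq V] [Fintype V]

lemma extract2 {A : Finset V} {ν : V → ℕ} (h : ∑ w ∈ A, ν w = 2) :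
    ∃ w₁ ∈ A, ∃ w₂ ∈ A, ∀ u ∈ A,
      ν u = (if u = w₁ then 1 else 0) + (if u = w₂ then 1 else 0) := by
  classical
  set B : Finset V := A.filter (fun w => ν w ≠ 0) with hBdef
  have hBsum : ∑ w ∈ B, ν w = 2 := by rw [hBdef, Finset.sum_filter_ne_zero]; exact h
  have hBzero : ∀ u ∈ A, u ∉ B → ν u = 0 := by
    intro u hu hnB
    by_contra hne
    exact hnB (Finset.mem_filter.mpr ⟨hu, hne⟩)
  have hBpos : ∀ w ∈ B, 1 ≤ ν w := by
    intro w hw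
    have := (Finset.mem_filter.mp hw).2
    omega
  have hcard : B.card ≤ 2 := by
    have := Finset.card_nsmul_le_sum B ν 1 hBpos
    simpa [hBsum] using this
  have hBsub : B ⊆ A := Finset.filter_subset _ _
  interval_cases hc : B.card
  · rw [Finset.card_eq_zero] at hc
    rw [hc] at hBsum
    simp at hBsum
  · rw [Finset.card_eq_one] at hc
    obtain ⟨w, hw⟩ := hc
    have hwB : w ∈ B := by rw [hw]; simp
    have hν : ν w = 2 := by rw [hw] at hBsum; simpa using hBsum
    refine ⟨w, hBsub hwB, w, hBsub hwB, ?_⟩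
    intro u hu
    by_cases huw : u = w
    · subst huw; simp [hν]
    · have : u ∉ B := by rw [hw]; simp [huw]
      simp [huw, hBzero u hu this]
  · rw [Finset.card_eq_two] at hc
    obtain ⟨w, w', hww', hw⟩ := hc
    have hwB : w ∈ B := by rw [hw]; simp
    have hw'B : w' ∈ B := by rw [hw]; simp
    have hsum2 : ν w + ν w' = 2 := by
      rw [hw, Finset.sum_pair hww'] at hBsum; exact hBsum
    have hν : ν w = 1 ∧ ν w' = 1 := by
      have h1 := hBpos w hwB
      have h2 := hBpos w' hw'B
      omega
    refine ⟨w, hBsub hwB, w', hBsub hw'B, ?_⟩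
    intro u hu
    by_cases h1 : u = w
    · subst h1; simp [hν.1, hww']
    · by_cases h2 : u = w'
      · subst h2; simp [hν.2, h1]
      · have : u ∉ B := by rw [hw]; simp [h1, h2]
        simp [h1, h2, hBzero u hu this]

lemma extract3 {A : Finset V} {ν : V → ℕ} (h : ∑ w ∈ A, ν w = 3) (hb : ∀ w, ν w ≤ 2) :
    ∃ x ∈ A, ∃ y ∈ A, ∃ z ∈ A, x ≠ y ∧ z ≠ y ∧ ∀ u ∈ A,
      ν u = (if u = x then 1 else 0) + (if u = y then 1 else 0) + (if u = z then 1 else 0) := by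
  classical
  set B : Finset V := A.filter (fun w => ν w ≠ 0) with hBdef
  have hBsum : ∑ w ∈ B, ν w = 3 := by rw [hBdef, Finset.sum_filter_ne_zero]; exact h
  have hBzero : ∀ u ∈ A, u ∉ B → ν u = 0 := by
    intro u hu hnB
    by_contra hne
    exact hnB (Finset.mem_filter.mpr ⟨hu, hne⟩)
  have hBpos : ∀ w ∈ B, 1 ≤ ν w := by
    intro w hw
    have := (Finset.mem_filter.mp hw).2
    omega
  have hcard : B.card ≤ 3 := by
    have := Finset.card_nsmul_le_sum B ν 1 hBpos
    simpa [hBsum] using this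
  have hBsub : B ⊆ A := Finset.filter_subset _ _
  interval_cases hc : B.card
  · rw [Finset.card_eq_zero] at hc
    rw [hc] at hBsum
    simp at hBsum
  · rw [Finset.card_eq_one] at hc
    obtain ⟨w, hw⟩ := hc
    have hν : ν w = 3 := by rw [hw] at hBsum; simpa using hBsum
    have := hb w
    omega
  · rw [Finset.card_eq_two] at hc
    obtain ⟨w, w', hww', hw⟩ := hc
    have hwB : w ∈ B := by rw [hw]; simp
    have hw'B : w' ∈ B := by rw [hw]; simp
    have hsum2 : ν w + ν w' = 3 := by
      rw [hw, Finset.sum_pair hww'] at hBsum; exact hBsum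
    have h1 := hBpos w hwB
    have h2 := hBpos w' hw'B
    have hb1 := hb w
    have hb2 := hb w'
    -- either (2,1) or (1,2)
    rcases Nat.lt_or_ge (ν w) 2 with hlt | hge
    · -- ν w = 1, ν w' = 2 : (x,y,z) = (w', w, w')
      have hνw : ν w = 1 := by omega
      have hνw' : ν w' = 2 := by omega
      refine ⟨w', hBsub hw'B, w, hBsub hwB, w', hBsub hw'B, hww'.symm, hww'.symm, ?_⟩
      intro u hu
      by_cases e1 : u = w'
      · subst e1; simp [hνw', hww'.symm]
      · by_cases e2 : u = w
        · subst e2; simp [hνw, hww']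
        · have : u ∉ B := by rw [hw]; simp [e1, e2]
          simp [e1, e2, hBzero u hu this]
    · -- ν w = 2, ν w' = 1 : (x,y,z) = (w, w', w)
      have hνw : ν w = 2 := by omega
      have hνw' : ν w' = 1 := by omega
      refine ⟨w, hBsub hwB, w', hBsub hw'B, w, hBsub hwB, hww', hww', ?_⟩
      intro u hu
      by_cases e1 : u = w
      · subst e1; simp [hνw, hww']
      · by_cases e2 : u = w'
        · subst e2; simp [hνw', hww'.symm]
        · have : u ∉ B := by rw [hw]; simp [e1, e2]
          simp [e1, e2, hBzero u hu this]
  · rw [Finset.card_eq_three] at hc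
    obtain ⟨w, w', w'', h12, h13, h23, hw⟩ := hc
    have hwB : w ∈ B := by rw [hw]; simp
    have hw'B : w' ∈ B := by rw [hw]; simp
    have hw''B : w'' ∈ B := by rw [hw]; simp
    have hsum3 : ν w + ν w' + ν w'' = 3 := by
      rw [hw] at hBsum
      rw [Finset.sum_insert (by simp [h12, h13]), Finset.sum_pair h23] at hBsum
      omega
    have h1 := hBpos w hwB
    have h2 := hBpos w' hw'B
    have h3 := hBpos w'' hw''B
    have hν1 : ν w = 1 := by omega
    have hν2 : ν w' = 1 := by omega
    have hν3 : ν w'' = 1 := by omega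
    refine ⟨w, hBsub hwB, w', hBsub hw'B, w'', hBsub hw''B, h12, h23.symm, ?_⟩
    intro u hu
    by_cases e1 : u = w
    · subst e1; simp [hν1, h12, h13]
    · by_cases e2 : u = w'
      · subst e2; simp [hν2, e1, h23, Ne.symm h12]
      · by_cases e3 : u = w''
        · subst e3; simp [hν3, Ne.symm h13, Ne.symm h23]
        · have : u ∉ B := by rw [hw]; simp [e1, e2, e3]
          simp [e1, e2, e3, hBzero u hu this]

end TwoTreesAux

namespace TwoTreesAux

variable {V : Type} [DecidableEq V] [Fintype V]

/-- Core reconstruction step for a degree-3 vertex. -/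
lemma core {S' : Finset V} {v x y z : V} (hv : v ∉ S') (hx : x ∈ S') (hy : y ∈ S')
    (hz : z ∈ S') (hxy : x ≠ y) (hzy : z ≠ y) {m : Sym2 V → ℕ}
    (hvm : ∀ p, v ∈ p → m p = (if p = s(v,x) then 1 else 0) + (if p = s(v,y) then 1 else 0)
      + (if p = s(v,z) then 1 else 0))
    {T₁ T₂ : Finset (Sym2 V)} (h₁ : MyTree S' T₁) (h₂ : MyTree S' T₂)
    (hT : s(x,y) ∈ T₁)
    (hsum : ∀ p, (if v ∈ p then 0 else m p) + (if p = s(x,y) then 1 else 0)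
      = (if p ∈ T₁ then 1 else 0) + (if p ∈ T₂ then 1 else 0)) :
    ∃ T₁' T₂' : Finset (Sym2 V), MyTree (insert v S') T₁' ∧ MyTree (insert v S') T₂' ∧
      ∀ p, m p = (if p ∈ T₁' then 1 else 0) + (if p ∈ T₂' then 1 else 0) := by
  have hvx : v ≠ x := fun h => hv (h ▸ hx)
  have hvy : v ≠ y := fun h => hv (h ▸ hy)
  have hvz : v ≠ z := fun h => hv (h ▸ hz)
  refine ⟨insert s(v,x) (insert s(v,y) (T₁.erase s(x,y))), insert s(v,z) T₂,
    mytree_swap h₁ hv hT, mytree_leaf h₂ hv hz, ?_⟩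
  have hvT₁ := h₁.not_mem_v hv
  have hvT₂ := h₂.not_mem_v hv
  intro p
  by_cases hvp : v ∈ p
  · have hm := hvm p hvp
    have hne1 : p ∉ T₁.erase s(x,y) := fun h => hvT₁ p (Finset.mem_of_mem_erase h) hvp
    have hne2 : p ∉ T₂ := fun h => hvT₂ p h hvp
    have hmem1 : (p ∈ insert s(v,x) (insert s(v,y) (T₁.erase s(x,y)))) ↔
        (p = s(v,x) ∨ p = s(v,y)) := by
      simp only [Finset.mem_insert]
      constructor
      · rintro (h | h | h)
        · exact Or.inl h
        · exact Or.inr h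
        · exact absurd h hne1
      · rintro (h | h)
        · exact Or.inl h
        · exact Or.inr (Or.inl h)
    have hmem2 : (p ∈ insert s(v,z) T₂) ↔ p = s(v,z) := by
      simp only [Finset.mem_insert]
      constructor
      · rintro (h | h)
        · exact h
        · exact absurd h hne2
      · exact Or.inl
    have hpxy : p ≠ s(x,y) := by
      intro h
      rw [h, Sym2.mem_iff] at hvp
      rcases hvp with h' | h'
      · exact hvx h'
      · exact hvy h'
    have hxyne : s(v,x) ≠ s(v,y) := fun h => hxy (Sym2.congr_right.mp h)
    have hzyne : s(v,z) ≠ s(v,y) := fun h => hzy (Sym2.congr_right.mp h)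
    rw [hm]
    by_cases e1 : p = s(v,x) <;> by_cases e2 : p = s(v,y) <;> by_cases e3 : p = s(v,z) <;>
      simp_all
  · have hm := hsum p
    rw [if_neg hvp] at hm
    have hpvx : p ≠ s(v,x) := fun h => hvp (h ▸ (by simp))
    have hpvy : p ≠ s(v,y) := fun h => hvp (h ▸ (by simp))
    have hpvz : p ≠ s(v,z) := fun h => hvp (h ▸ (by simp))
    have hmem1 : (p ∈ insert s(v,x) (insert s(v,y) (T₁.erase s(x,y)))) ↔
        (p ∈ T₁ ∧ p ≠ s(x,y)) := by
      simp only [Finset.mem_insert, Finset.mem_erase]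
      constructor
      · rintro (h | h | h)
        · exact absurd h hpvx
        · exact absurd h hpvy
        · exact ⟨h.2, h.1⟩
      · intro h
        exact Or.inr (Or.inr ⟨h.2, h.1⟩)
    have hmem2 : (p ∈ insert s(v,z) T₂) ↔ p ∈ T₂ := by
      simp only [Finset.mem_insert]
      constructor
      · rintro (h | h)
        · exact absurd h hpvz
        · exact h
      · exact Or.inr
    by_cases exy : p = s(x,y)
    · subst exy
      rw [if_pos rfl] at hm
      rw [if_pos hT] at hm
      simp only [hmem1, hmem2]
      simp only [ne_eq, not_true_eq_false, and_false, if_false]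
      by_cases h2 : s(x,y) ∈ T₂ <;> simp [h2] at hm ⊢ <;> omega
    · rw [if_neg exy] at hm
      simp only [hmem1, hmem2]
      by_cases h1 : p ∈ T₁ <;> by_cases h2 : p ∈ T₂ <;> simp [h1, h2, exy] at hm ⊢ <;> omega

end TwoTreesAux

namespace TwoTreesAux

variable {V : Type} [DecidableEq V] [Fintype V]

lemma ite_edge_eq {v u w : V} (c : ℕ) :
    (if s(v,u) = s(v,w) then c else 0) = (if u = w then c else 0) := by
  by_cases h : u = w
  · rw [if_pos (by rw [h]), if_pos h]
  · rw [if_neg (fun hh => h (Sym2.congr_right.mp hh)), if_neg h]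

/-- Main induction: a `(2,2)`-tight multigraph decomposes into two spanning trees. -/
lemma key : ∀ (n : ℕ) (S : Finset V), S.card = n → S.Nonempty → ∀ m : Sym2 V → ℕ,
    (∀ p, m p ≠ 0 → ¬ p.IsDiag ∧ ∀ x ∈ p, x ∈ S) →
    (∀ W ⊆ S, W.Nonempty → eC m W + 2 ≤ 2 * W.card) →
    (eC m S + 2 = 2 * S.card) →
    ∃ T₁ T₂ : Finset (Sym2 V), MyTree S T₁ ∧ MyTree S T₂ ∧
      ∀ p, m p = (if p ∈ T₁ then 1 else 0) + (if p ∈ T₂ then 1 else 0) := by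
  intro n
  induction n using Nat.strong_induction_on with
  | _ n IH =>
  intro S hcard hSne m hsupp hsparse htight
  have hSpos : 1 ≤ S.card := Finset.card_pos.mpr hSne
  by_cases h1 : S.card = 1
  -- base case
  · have hE0 : eC m S = 0 := by omega
    have hm0 : ∀ p, m p = 0 := by
      intro p
      by_contra hm
      obtain ⟨hnd, hin⟩ := hsupp p hm
      have hpmem : p ∈ S.sym2 := Finset.mem_sym2_iff.mpr hin
      rw [eC] at hE0
      exact hm (Finset.sum_eq_zero_iff.mp hE0 p hpmem)
    obtain ⟨c, hc⟩ := Finset.card_eq_one.mp h1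
    have hT : MyTree S (∅ : Finset (Sym2 V)) := by
      refine ⟨by simp, ?_, ?_⟩
      · intro p hp q hq
        rw [hc, Finset.mem_singleton] at hp hq
        rw [hp, hq]
      · intro u w hw
        have hlen : 0 < w.edges.length := by
          rw [SimpleGraph.Walk.length_edges]
          have := hw.three_le_length
          omega
        obtain ⟨e, he⟩ := List.exists_mem_of_length_pos hlen
        have hmem := w.edges_subset_edgeSet he
        rw [edgeSet_fromEdgeSet] at hmem
        simpa using hmem.1
    exact ⟨∅, ∅, hT, hT, fun p => by simp [hm0 p]⟩
  -- inductive step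
  · have hS2 : 2 ≤ S.card := by omega
    set degv : V → ℕ := fun v => ∑ p ∈ S.sym2.filter (fun p => v ∈ p), m p with hdegdef
    have hhs : ∑ v ∈ S, degv v = 2 * eC m S := handshake m hsupp
    have hmin : ∃ v ∈ S, degv v ≤ 3 := by
      by_contra hcon
      push_neg at hcon
      have h4 : ∀ v ∈ S, 4 ≤ degv v := fun v hv => hcon v hv
      have hge := Finset.card_nsmul_le_sum S degv 4 h4
      rw [hhs] at hge
      simp only [smul_eq_mul] at hge
      omega
    obtain ⟨v, hvS, hdle⟩ := hmin
    have hS'ne : (S.erase v).Nonempty := by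
      rw [← Finset.card_pos, Finset.card_erase_of_mem hvS]; omega
    have hsplit : eC m S = eC m (S.erase v) + degv v := eC_erase m
    have hlow : eC m (S.erase v) + 2 ≤ 2 * (S.erase v).card :=
      hsparse _ (Finset.erase_subset _ _) hS'ne
    have hcarderase : (S.erase v).card = S.card - 1 := Finset.card_erase_of_mem hvS
    have hdge : 2 ≤ degv v := by omega
    have hvnotin : v ∉ S.erase v := Finset.notMem_erase _ _
    have hins : insert v (S.erase v) = S := Finset.insert_erase hvS
    have hstar : degv v = ∑ w ∈ S.erase v, m s(v,w) := by
      rw [hdegdef]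
      have h := star_sum m (fun p hm => (hsupp p hm).1) hvnotin
      rw [hins] at h
      exact h
    set S' := S.erase v with hS'def
    set m' : Sym2 V → ℕ := fun p => if v ∈ p then 0 else m p with hm'def
    have hsupp' : ∀ p, m' p ≠ 0 → ¬ p.IsDiag ∧ ∀ x ∈ p, x ∈ S' := by
      intro p hm
      simp only [hm'def] at hm
      by_cases hvp : v ∈ p
      · simp [hvp] at hm
      · rw [if_neg hvp] at hm
        obtain ⟨hnd, hin⟩ := hsupp p hm
        exact ⟨hnd, fun u hu => Finset.mem_erase.mpr ⟨fun he => hvp (he ▸ hu), hin u hu⟩⟩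
    have heCm' : ∀ W ⊆ S', eC m' W = eC m W := by
      intro W hW
      apply eC_congr
      intro p hp
      simp only [hm'def]
      refine if_neg ?_
      intro hvp
      have hvW := Finset.mem_sym2_iff.mp hp v hvp
      exact hvnotin (hW hvW)
    have hsparse' : ∀ W ⊆ S', W.Nonempty → eC m' W + 2 ≤ 2 * W.card := by
      intro W hW hne
      rw [heCm' W hW]
      exact hsparse W (hW.trans (Finset.erase_subset _ _)) hne
    have hzerom : m s(v,v) = 0 := by
      by_contra hmm
      exact (hsupp _ hmm).1 (Sym2.mk_isDiag_iff.mpr rfl)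
    have hfar : ∀ u, u ≠ v → u ∉ S' → m s(v,u) = 0 := by
      intro u huv huS
      by_contra hmm
      have hu : u ∈ S := (hsupp _ hmm).2 u (by simp)
      exact huS (Finset.mem_erase.mpr ⟨huv, hu⟩)
    have hdeg23 : degv v = 2 ∨ degv v = 3 := by omega
    rcases hdeg23 with hdeg | hdeg
    -- degree 2
    · have hsum2 : ∑ w ∈ S', m s(v,w) = 2 := by rw [← hstar]; exact hdeg
      obtain ⟨w₁, hw₁, w₂, hw₂, hν⟩ := extract2 hsum2
      have hw₁v : w₁ ≠ v := (Finset.mem_erase.mp hw₁).1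
      have hw₂v : w₂ ≠ v := (Finset.mem_erase.mp hw₂).1
      have hvm : ∀ p, v ∈ p → m p =
          (if p = s(v,w₁) then 1 else 0) + (if p = s(v,w₂) then 1 else 0) := by
        intro p hvp
        obtain ⟨u, rfl⟩ := Sym2.mem_iff_exists.mp hvp
        rw [ite_edge_eq, ite_edge_eq]
        by_cases huv : u = v
        · subst huv
          rw [hzerom, if_neg (fun h => hw₁v h.symm), if_neg (fun h => hw₂v h.symm)]
        · by_cases huS : u ∈ S'
          · exact hν u huS
          · have h1 : u ≠ w₁ := fun h => huS (h ▸ hw₁)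
            have h2 : u ≠ w₂ := fun h => huS (h ▸ hw₂)
            rw [hfar u huv huS, if_neg h1, if_neg h2]
      have htight' : eC m' S' + 2 = 2 * S'.card := by
        rw [heCm' S' (Finset.Subset.refl _)]
        omega
      obtain ⟨T₁, T₂, ht₁, ht₂, hs⟩ :=
        IH S'.card (by omega) S' rfl hS'ne m' hsupp' hsparse' htight'
      have hmt₁ := mytree_leaf ht₁ hvnotin hw₁
      have hmt₂ := mytree_leaf ht₂ hvnotin hw₂
      rw [hins] at hmt₁ hmt₂
      refine ⟨insert s(v,w₁) T₁, insert s(v,w₂) T₂, hmt₁, hmt₂, ?_⟩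
      have hvT₁ := ht₁.not_mem_v hvnotin
      have hvT₂ := ht₂.not_mem_v hvnotin
      intro p
      by_cases hvp : v ∈ p
      · have hmem1 : (p ∈ insert s(v,w₁) T₁) ↔ p = s(v,w₁) := by
          simp only [Finset.mem_insert]
          exact ⟨fun h => h.resolve_right (fun hh => hvT₁ p hh hvp), Or.inl⟩
        have hmem2 : (p ∈ insert s(v,w₂) T₂) ↔ p = s(v,w₂) := by
          simp only [Finset.mem_insert]
          exact ⟨fun h => h.resolve_right (fun hh => hvT₂ p hh hvp), Or.inl⟩
        rw [hvm p hvp]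
        simp only [hmem1, hmem2]
      · have hp1 : p ≠ s(v,w₁) := fun h => hvp (h ▸ (by simp))
        have hp2 : p ≠ s(v,w₂) := fun h => hvp (h ▸ (by simp))
        have hmem1 : (p ∈ insert s(v,w₁) T₁) ↔ p ∈ T₁ := by
          simp only [Finset.mem_insert]
          exact ⟨fun h => h.resolve_left hp1, Or.inr⟩
        have hmem2 : (p ∈ insert s(v,w₂) T₂) ↔ p ∈ T₂ := by
          simp only [Finset.mem_insert]
          exact ⟨fun h => h.resolve_left hp2, Or.inr⟩
        have h := hs p
        simp only [hm'def] at h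
        rw [if_neg hvp] at h
        simp only [hmem1, hmem2]
        exact h
    -- degree 3
    · have hb : ∀ w, m s(v,w) ≤ 2 := by
        intro w
        by_cases hwv : w = v
        · subst hwv; rw [hzerom]; omega
        · by_cases hwS : w ∈ S
          · have hsub : ({v, w} : Finset V) ⊆ S := by
              intro u hu
              rcases Finset.mem_insert.mp hu with rfl | hu
              · exact hvS
              · rw [Finset.mem_singleton] at hu; rw [hu]; exact hwS
            have hsp := hsparse {v,w} hsub ⟨v, Finset.mem_insert_self _ _⟩
            have hcard2 : ({v,w} : Finset V).card = 2 :=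
              Finset.card_pair (fun h => hwv h.symm)
            have hmemvw : s(v,w) ∈ ({v,w} : Finset V).sym2 := by
              rw [Finset.mem_sym2_iff]
              intro u hu
              rw [Sym2.mem_iff] at hu
              rcases hu with rfl | rfl
              · exact Finset.mem_insert_self _ _
              · exact Finset.mem_insert_of_mem (Finset.mem_singleton_self _)
            have hle : m s(v,w) ≤ eC m {v,w} :=
              Finset.single_le_sum (fun i _ => Nat.zero_le _) hmemvw
            omega
          · rw [hfar w hwv (fun h => hwS ((Finset.erase_subset _ _) h))]; omega
      have hsum3 : ∑ w ∈ S', m s(v,w) = 3 := by rw [← hstar]; exact hdeg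
      obtain ⟨x, hx, y, hy, z, hz, hxy, hzy, hν⟩ := extract3 hsum3 hb
      have hvm : ∀ p, v ∈ p → m p = (if p = s(v,x) then 1 else 0) +
          (if p = s(v,y) then 1 else 0) + (if p = s(v,z) then 1 else 0) := by
        intro p hvp
        obtain ⟨u, rfl⟩ := Sym2.mem_iff_exists.mp hvp
        rw [ite_edge_eq, ite_edge_eq, ite_edge_eq]
        by_cases huv : u = v
        · subst huv
          rw [hzerom, if_neg (fun h => (Finset.mem_erase.mp hx).1 h.symm),
            if_neg (fun h => (Finset.mem_erase.mp hy).1 h.symm),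
            if_neg (fun h => (Finset.mem_erase.mp hz).1 h.symm)]
        · by_cases huS : u ∈ S'
          · exact hν u huS
          · rw [hfar u huv huS, if_neg (fun h => huS (by rw [h]; exact hx)),
              if_neg (fun h => huS (by rw [h]; exact hy)),
              if_neg (fun h => huS (by rw [h]; exact hz))]
      have hνy : m s(v,y) = 1 := by
        have h := hν y hy
        rw [if_neg (Ne.symm hxy), if_pos rfl, if_neg (Ne.symm hzy)] at h
        omega
      have hviol : ∀ D : Finset V, D ⊆ S' → eC m D + 2 = 2 * D.card →
          (∑ w ∈ D, m s(v,w)) ≤ 2 := by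
        intro D hD htightD
        by_contra hcon
        push_neg at hcon
        have hvnotinD : v ∉ D := fun h => hvnotin (hD h)
        have hinsd : eC m (insert v D) = eC m D + ∑ w ∈ D, m s(v,w) := by
          have h1 : eC m (insert v D) = eC m ((insert v D).erase v) +
              ∑ p ∈ (insert v D).sym2.filter (fun p => v ∈ p), m p := eC_erase m
          rw [Finset.erase_insert hvnotinD] at h1
          rw [h1, star_sum m (fun p hm => (hsupp p hm).1) hvnotinD]
        have hsubS : insert v D ⊆ S := by
          intro u hu
          rcases Finset.mem_insert.mp hu with rfl | hu
          · exact hvS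
          · exact (Finset.erase_subset _ _) (hD hu)
        have hsp := hsparse _ hsubS ⟨v, Finset.mem_insert_self _ _⟩
        have hc : (insert v D).card = D.card + 1 := Finset.card_insert_of_notMem hvnotinD
        omega
      have hunion : ∀ D₁ D₂ : Finset V, D₁ ⊆ S' → D₂ ⊆ S' → (D₁ ∩ D₂).Nonempty →
          eC m D₁ + 2 = 2 * D₁.card → eC m D₂ + 2 = 2 * D₂.card →
          eC m (D₁ ∪ D₂) + 2 = 2 * (D₁ ∪ D₂).card := by
        intro D₁ D₂ hd1 hd2 hinter ht1 ht2
        have hsup := eC_supermod m D₁ D₂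
        have hsubS : D₁ ∪ D₂ ⊆ S := Finset.union_subset
          (hd1.trans (Finset.erase_subset _ _)) (hd2.trans (Finset.erase_subset _ _))
        obtain ⟨u, hu⟩ := hinter
        have hspU := hsparse _ hsubS ⟨u, Finset.mem_union_left _ (Finset.mem_inter.mp hu).1⟩
        have hspI := hsparse (D₁ ∩ D₂)
          ((Finset.inter_subset_left).trans (hd1.trans (Finset.erase_subset _ _)))
          ⟨u, hu⟩
        have hcards := Finset.card_union_add_card_inter D₁ D₂
        omega
      have hgood : ∃ a b c : V, a ∈ S' ∧ b ∈ S' ∧ c ∈ S' ∧ a ≠ b ∧ c ≠ b ∧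
          (∀ p, v ∈ p → m p = (if p = s(v,a) then 1 else 0) + (if p = s(v,b) then 1 else 0)
            + (if p = s(v,c) then 1 else 0)) ∧
          ¬ (∃ D ⊆ S', a ∈ D ∧ b ∈ D ∧ eC m D + 2 = 2 * D.card) := by
        by_cases hzx : z = x
        · refine ⟨x, y, z, hx, hy, hz, hxy, hzy, hvm, ?_⟩
          rintro ⟨D, hD, haD, hbD, htD⟩
          have hνx : m s(v,x) = 2 := by
            have h := hν x hx
            rw [if_pos rfl, if_neg hxy, if_pos hzx.symm] at h
            omega
          have hsubD : ({x, y} : Finset V) ⊆ D := by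
            intro u hu
            rcases Finset.mem_insert.mp hu with rfl | hu
            · exact haD
            · rw [Finset.mem_singleton] at hu; rw [hu]; exact hbD
          have hge := Finset.sum_le_sum_of_subset (f := fun w => m s(v,w)) hsubD
          rw [Finset.sum_pair hxy, hνx, hνy] at hge
          have hge' : 3 ≤ ∑ w ∈ D, m s(v,w) := hge
          have hv2 := hviol D hD htD
          omega
        · have hνx : m s(v,x) = 1 := by
            have h := hν x hx
            rw [if_pos rfl, if_neg hxy, if_neg (fun h' => hzx h'.symm)] at h
            omega
          have hνz : m s(v,z) = 1 := by
            have h := hν z hz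
            rw [if_neg hzx, if_neg hzy, if_pos rfl] at h
            omega
          by_cases hbxy : ∃ D ⊆ S', x ∈ D ∧ y ∈ D ∧ eC m D + 2 = 2 * D.card
          · refine ⟨z, y, x, hz, hy, hx, hzy, hxy, ?_, ?_⟩
            · intro p hvp
              rw [hvm p hvp]
              ring
            · rintro ⟨D₂, hD₂, hzD, hyD, htD₂⟩
              obtain ⟨D₁, hD₁, hxD, hyD₁, htD₁⟩ := hbxy
              have hUt := hunion D₁ D₂ hD₁ hD₂
                ⟨y, Finset.mem_inter.mpr ⟨hyD₁, hyD⟩⟩ htD₁ htD₂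
              have hsubD : ({x, y, z} : Finset V) ⊆ D₁ ∪ D₂ := by
                intro u hu
                rcases Finset.mem_insert.mp hu with rfl | hu
                · exact Finset.mem_union_left _ hxD
                · rcases Finset.mem_insert.mp hu with rfl | hu
                  · exact Finset.mem_union_left _ hyD₁
                  · rw [Finset.mem_singleton] at hu; rw [hu]
                    exact Finset.mem_union_right _ hzD
              have hge := Finset.sum_le_sum_of_subset (f := fun w => m s(v,w)) hsubD
              have hxnyz : x ∉ ({y, z} : Finset V) := by
                simp only [Finset.mem_insert, Finset.mem_singleton]
                push_neg
                exact ⟨hxy, fun h => hzx h.symm⟩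
              rw [Finset.sum_insert hxnyz, Finset.sum_pair (fun h => hzy h.symm),
                hνx, hνy, hνz] at hge
              have hge' : 3 ≤ ∑ w ∈ D₁ ∪ D₂, m s(v,w) := hge
              have hv2 := hviol _ (Finset.union_subset hD₁ hD₂) hUt
              omega
          · exact ⟨x, y, z, hx, hy, hz, hxy, hzy, hvm, hbxy⟩
      obtain ⟨a, b, c, haS, hbS, hcS, hab, hcb, hvm', hnb⟩ := hgood
      have habs : ¬ (s(a,b) : Sym2 V).IsDiag := by simp [Sym2.mk_isDiag_iff, hab]
      have hvab : v ∉ (s(a,b) : Sym2 V) := by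
        rw [Sym2.mem_iff]
        push_neg
        exact ⟨fun h => (Finset.mem_erase.mp haS).1 h.symm,
          fun h => (Finset.mem_erase.mp hbS).1 h.symm⟩
      set m'' : Sym2 V → ℕ :=
        fun p => (if v ∈ p then 0 else m p) + (if p = s(a,b) then 1 else 0) with hm''def
      have hsupp'' : ∀ p, m'' p ≠ 0 → ¬ p.IsDiag ∧ ∀ u ∈ p, u ∈ S' := by
        intro p hm
        simp only [hm''def] at hm
        by_cases hpe : p = s(a,b)
        · subst hpe
          refine ⟨habs, ?_⟩
          intro u hu
          rw [Sym2.mem_iff] at hu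
          rcases hu with rfl | rfl
          · exact haS
          · exact hbS
        · rw [if_neg hpe, add_zero] at hm
          exact hsupp' p hm
      have habsym : (s(a,b) : Sym2 V) ∈ S'.sym2 := by
        rw [Finset.mem_sym2_iff]
        intro u hu
        rw [Sym2.mem_iff] at hu
        rcases hu with rfl | rfl
        · exact haS
        · exact hbS
      have heC'' : ∀ W : Finset V, eC m'' W = eC m' W + (if s(a,b) ∈ W.sym2 then 1 else 0) := by
        intro W
        simp only [hm''def, hm'def]
        exact (eC_add _ _ W).trans (by rw [eC_delta])
      have hsparse'' : ∀ W ⊆ S', W.Nonempty → eC m'' W + 2 ≤ 2 * W.card := by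
        intro W hW hne
        rw [heC'' W, heCm' W hW]
        by_cases hmemW : s(a,b) ∈ W.sym2
        · have haW : a ∈ W := Finset.mem_sym2_iff.mp hmemW a (by simp)
          have hbW : b ∈ W := Finset.mem_sym2_iff.mp hmemW b (by simp)
          have hnt : eC m W + 2 ≠ 2 * W.card := fun h => hnb ⟨W, hW, haW, hbW, h⟩
          have hsp := hsparse W (hW.trans (Finset.erase_subset _ _)) hne
          rw [if_pos hmemW]
          omega
        · rw [if_neg hmemW, add_zero]
          exact hsparse W (hW.trans (Finset.erase_subset _ _)) hne
      have htight'' : eC m'' S' + 2 = 2 * S'.card := by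
        rw [heC'' S', heCm' S' (Finset.Subset.refl _), if_pos habsym]
        omega
      obtain ⟨T₁, T₂, ht₁, ht₂, hs⟩ :=
        IH S'.card (by omega) S' rfl hS'ne m'' hsupp'' hsparse'' htight''
      have hs' : ∀ p, (if v ∈ p then 0 else m p) + (if p = s(a,b) then 1 else 0)
          = (if p ∈ T₁ then 1 else 0) + (if p ∈ T₂ then 1 else 0) := by
        intro p
        have h := hs p
        rw [hm''def] at h
        exact h
      have hmem : s(a,b) ∈ T₁ ∨ s(a,b) ∈ T₂ := by
        by_contra hcon
        push_neg at hcon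
        have h := hs' s(a,b)
        rw [if_neg (by simpa using hvab), if_pos rfl, if_neg hcon.1, if_neg hcon.2] at h
        omega
      rcases hmem with hmem | hmem
      · obtain ⟨T₁', T₂', h1', h2', hfin⟩ :=
          core hvnotin haS hbS hcS hab hcb hvm' ht₁ ht₂ hmem hs'
        rw [hins] at h1' h2'
        exact ⟨T₁', T₂', h1', h2', hfin⟩
      · have hs'' : ∀ p, (if v ∈ p then 0 else m p) + (if p = s(a,b) then 1 else 0)
            = (if p ∈ T₂ then 1 else 0) + (if p ∈ T₁ then 1 else 0) := by
          intro p
          rw [hs' p, add_comm]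
        obtain ⟨T₁', T₂', h1', h2', hfin⟩ :=
          core hvnotin haS hbS hcS hab hcb hvm' ht₂ ht₁ hmem hs''
        rw [hins] at h1' h2'
        exact ⟨T₁', T₂', h1', h2', hfin⟩

end TwoTreesAux

namespace TwoTreesAux

variable {V : Type} [DecidableEq V] [Fintype V]

lemma subgraph_edge_vert {G : SimpleGraph V} (H : G.Subgraph) :
    ∀ p ∈ H.edgeSet, ∀ u ∈ p, u ∈ H.verts := by
  intro p
  induction p using Sym2.ind with
  | _ a b =>
    intro hp u hu
    rw [SimpleGraph.Subgraph.mem_edgeSet] at hp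
    rw [Sym2.mem_iff] at hu
    rcases hu with rfl | rfl
    · exact H.edge_vert hp
    · exact H.edge_vert hp.symm

end TwoTreesAux

open TwoTreesAux in
theorem maxIndep2_iff_twoSpanningTrees' {V : Type} [Fintype V]
    (G : SimpleGraph V) (hconn : G.Connected) (hE : G.edgeSet.Nonempty) :
    MaxIndep2 G ↔ TwoSpanningTrees G := by
  classical
  haveI : Nonempty V := hconn.nonempty
  constructor
  · rintro ⟨hI, hF⟩
    set m : Sym2 V → ℕ := fun p => if p ∈ G.edgeSet then 1 else 0 with hmdef
    have heCcard : ∀ W : Finset V,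
        eC m W = (W.sym2.filter (fun p => p ∈ G.edgeSet)).card := by
      intro W
      rw [eC]
      simp only [hmdef]
      rw [Finset.sum_boole]
      simp
    have hsupp : ∀ p, m p ≠ 0 → ¬ p.IsDiag ∧ ∀ x ∈ p, x ∈ (Finset.univ : Finset V) := by
      intro p hp
      simp only [hmdef] at hp
      by_cases hmem : p ∈ G.edgeSet
      · exact ⟨G.not_isDiag_of_mem_edgeSet hmem, fun x _ => Finset.mem_univ x⟩
      · simp [hmem] at hp
    have hsparse : ∀ W ⊆ (Finset.univ : Finset V), W.Nonempty →
        eC m W + 2 ≤ 2 * W.card := by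
      intro W _ hWne
      set H : G.Subgraph :=
        { verts := ↑W
          Adj := fun a b => G.Adj a b ∧ a ∈ W ∧ b ∈ W
          adj_sub := fun h => h.1
          edge_vert := fun h => h.2.1
          symm := ⟨fun a b h => ⟨h.1.symm, h.2.2, h.2.1⟩⟩ } with hHdef
      have hfree := hI H (by rw [hHdef]; exact ⟨hWne.choose, by simpa using hWne.choose_spec⟩)
      rw [subFreedom] at hfree
      have hverts : H.verts.ncard = W.card := by rw [hHdef]; exact Set.ncard_coe_finset W
      have hedges : H.edgeSet = ↑(W.sym2.filter (fun p => p ∈ G.edgeSet)) := by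
        ext p
        induction p using Sym2.ind with
        | _ a b =>
          rw [SimpleGraph.Subgraph.mem_edgeSet, Finset.mem_coe, Finset.mem_filter,
            Finset.mem_sym2_iff]
          constructor
          · rintro ⟨hadj, ha, hb⟩
            refine ⟨?_, hadj⟩
            intro u hu
            rw [Sym2.mem_iff] at hu
            rcases hu with rfl | rfl
            · exact ha
            · exact hb
          · rintro ⟨hin, hadj⟩
            exact ⟨hadj, hin a (by simp), hin b (by simp)⟩
      have hecard : H.edgeSet.ncard = eC m W := by
        rw [hedges, Set.ncard_coe_finset, heCcard]
      rw [hverts, hecard] at hfree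
      omega
    have htight : eC m (Finset.univ : Finset V) + 2 = 2 * (Finset.univ : Finset V).card := by
      have hseteq : G.edgeSet = ↑((Finset.univ : Finset V).sym2.filter
          (fun p => p ∈ G.edgeSet)) := by
        ext p
        rw [Finset.mem_coe, Finset.mem_filter]
        constructor
        · intro h
          exact ⟨Finset.mem_sym2_iff.mpr (fun a _ => Finset.mem_univ a), h⟩
        · exact fun h => h.2
      have hecard : G.edgeSet.ncard = eC m (Finset.univ : Finset V) := by
        rw [hseteq, Set.ncard_coe_finset, heCcard]
      rw [gFreedom] at hF
      have huniv : (Set.univ : Set V).ncard = (Finset.univ : Finset V).card := by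
        rw [← Finset.coe_univ, Set.ncard_coe_finset]
      rw [huniv, hecard] at hF
      omega
    obtain ⟨T₁, T₂, ht₁, ht₂, hsum⟩ := key (Finset.univ : Finset V).card
      (Finset.univ : Finset V) rfl Finset.univ_nonempty m hsupp hsparse htight
    have htree : ∀ T : Finset (Sym2 V), MyTree (Finset.univ : Finset V) T →
        (fromEdgeSet (T : Set (Sym2 V))).IsTree := by
      intro T hT
      rw [isTree_iff]
      refine ⟨⟨fun a b => hT.2.1 a (Finset.mem_univ a) b (Finset.mem_univ b)⟩, hT.2.2⟩
    refine ⟨(T₁ : Set (Sym2 V)), (T₂ : Set (Sym2 V)), ?_, ?_, htree T₁ ht₁, htree T₂ ht₂⟩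
    · ext p
      have h := hsum p
      simp only [hmdef] at h
      simp only [Set.mem_union, Finset.mem_coe]
      by_cases he : p ∈ G.edgeSet <;> by_cases h1 : p ∈ T₁ <;> by_cases h2 : p ∈ T₂ <;>
        simp_all
    · rw [Set.disjoint_left]
      intro p h1 h2
      have h := hsum p
      rw [Finset.mem_coe] at h1 h2
      simp only [hmdef] at h
      rw [if_pos h1, if_pos h2] at h
      by_cases he : p ∈ G.edgeSet <;> simp [he] at h
  · rintro ⟨E₁, E₂, hunion, hdisj, ht₁, ht₂⟩
    have hsub₁ : E₁ ⊆ G.edgeSet := hunion ▸ Set.subset_union_left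
    have hsub₂ : E₂ ⊆ G.edgeSet := hunion ▸ Set.subset_union_right
    have hfe : ∀ E : Set (Sym2 V), E ⊆ G.edgeSet → (fromEdgeSet E).edgeSet = E := by
      intro E hEsub
      rw [edgeSet_fromEdgeSet]
      ext p
      simp only [Set.mem_diff, Set.mem_setOf_eq]
      exact ⟨fun h => h.1, fun h => ⟨h, G.not_isDiag_of_mem_edgeSet (hEsub h)⟩⟩
    have hcard : ∀ E : Set (Sym2 V), E ⊆ G.edgeSet → (fromEdgeSet E).IsTree →
        E.ncard + 1 = Fintype.card V := by
      intro E hEsub htr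
      haveI : Fintype ((fromEdgeSet E).edgeSet) := Set.Finite.fintype (Set.toFinite _)
      have h1 := htr.card_edgeFinset
      have h2 : (fromEdgeSet E).edgeFinset.card = E.ncard := by
        rw [SimpleGraph.edgeFinset, ← Set.ncard_eq_toFinset_card' ((fromEdgeSet E).edgeSet)]
        · rw [hfe E hEsub]
      omega
    have hc₁ := hcard E₁ hsub₁ ht₁
    have hc₂ := hcard E₂ hsub₂ ht₂
    have hncard : G.edgeSet.ncard = E₁.ncard + E₂.ncard := by
      rw [← hunion]
      exact Set.ncard_union_eq hdisj (Set.toFinite _) (Set.toFinite _)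
    have hVpos : 1 ≤ Fintype.card V := Fintype.card_pos
    constructor
    · -- Indep2
      intro H hne
      set A₁ : Set (Sym2 V) := H.edgeSet ∩ E₁ with hA₁def
      set A₂ : Set (Sym2 V) := H.edgeSet ∩ E₂ with hA₂def
      have hAsub : H.edgeSet ⊆ G.edgeSet := H.edgeSet_subset
      have hAun : H.edgeSet = A₁ ∪ A₂ := by
        rw [hA₁def, hA₂def, ← Set.inter_union_distrib_left, hunion]
        exact (Set.inter_eq_self_of_subset_left hAsub).symm
      have hAdisj : Disjoint A₁ A₂ :=
        hdisj.mono Set.inter_subset_right Set.inter_subset_right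
      have hAcard : H.edgeSet.ncard = A₁.ncard + A₂.ncard := by
        rw [hAun]
        exact Set.ncard_union_eq hAdisj (Set.toFinite _) (Set.toFinite _)
      set W : Finset V := H.verts.toFinset with hWdef
      have hWne : W.Nonempty := by
        rw [hWdef]
        exact Set.toFinset_nonempty.mpr hne
      have hbound : ∀ (A : Set (Sym2 V)) (E : Set (Sym2 V)), A = H.edgeSet ∩ E →
          E ⊆ G.edgeSet → (fromEdgeSet E).IsTree → A.ncard + 1 ≤ W.card := by
        intro A E hAdef hEsub htr
        have hfin : A.toFinset.card = A.ncard := (Set.ncard_eq_toFinset_card' A).symm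
        rw [← hfin]
        apply forest_bound A.toFinset W hWne
        · intro p hp
          rw [Set.mem_toFinset, hAdef] at hp
          refine ⟨G.not_isDiag_of_mem_edgeSet (hAsub hp.1), ?_⟩
          intro u hu
          rw [hWdef, Set.mem_toFinset]
          exact subgraph_edge_vert H p hp.1 u hu
        · have hle : fromEdgeSet ((A.toFinset : Finset (Sym2 V)) : Set (Sym2 V)) ≤
              fromEdgeSet E := by
            apply fromEdgeSet_mono
            rw [Set.coe_toFinset, hAdef]
            exact Set.inter_subset_right
          exact isAcyclic_anti hle ((isTree_iff _).mp htr).2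
      have hb₁ := hbound A₁ E₁ hA₁def hsub₁ ht₁
      have hb₂ := hbound A₂ E₂ hA₂def hsub₂ ht₂
      have hWcard : W.card = H.verts.ncard := by
        rw [hWdef, ← Set.ncard_eq_toFinset_card']
      rw [subFreedom]
      rw [← hWcard] at *
      have h2 : H.edgeSet.ncard + 2 ≤ 2 * W.card := by omega
      push_cast
      omega
    · -- gFreedom
      rw [gFreedom]
      have huniv : (Set.univ : Set V).ncard = Fintype.card V := by
        rw [Set.ncard_univ, Nat.card_eq_fintype_card]
      rw [huniv, hncard]
      push_cast
      omega

/-- A finite connected simple graph with at least one edge is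
maximally independent of type 2 if and only if it is an edge-disjoint union of
two spanning trees. -/
theorem maxIndep2_iff_twoSpanningTrees {V : Type} [Fintype V]
    (G : SimpleGraph V) (hconn : G.Connected) (hE : G.edgeSet.Nonempty) :
    MaxIndep2 G ↔ TwoSpanningTrees G := by
  exact maxIndep2_iff_twoSpanningTrees' G hconn hE
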